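/- Under Assumptions 1 and 2 with f(t,0)=0, for any solution x(t) with ‖x(t)‖₂ < R, the derivative of the squared Euclidean norm satisfies (1/2)(d/dt)‖x(t)‖₂² ≤ (-μ₀ + D₀‖x(t)‖₂/(R(R-‖x(t)‖₂))) ‖x(t)‖₂². -/

import Mathlib

open Finset

lemma aux_sum_eq_one {d : ℕ} (α : Fin d → ℕ) (h : ∑ i, α i = 1) :
    ∃ i, α = fun i' => if i' = i then 1 else 0 := by
  obtain ⟨i, hi⟩ : ∃ i, α i ≠ 0 := by
    by_contra hc
    push_neg at hc
    rw [Finset.sum_eq_zero (fun i _ => hc i)] at h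
    exact one_ne_zero h.symm
  have hsplit : α i + ∑ j ∈ Finset.univ.erase i, α j = 1 := by
    rw [Finset.add_sum_erase Finset.univ α (Finset.mem_univ i)]; exact h
  have hrest : ∀ j ∈ Finset.univ.erase i, α j = 0 :=
    Finset.sum_eq_zero_iff.mp (by omega)
  refine ⟨i, funext fun j => ?_⟩
  by_cases hj : j = i
  · simp [hj]; omega
  · simp [hj]
    exact hrest j (Finset.mem_erase.mpr ⟨hj, Finset.mem_univ j⟩)

theorem stmt_16 (d : ℕ) (hd : 1 ≤ d) (t₀ D₀ R μ₀ : ℝ)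
    (hD₀ : 0 < D₀) (hR : 0 < R) (hμ₀ : 0 < μ₀)
    (c : (Fin d → ℕ) → ℝ → Fin d → ℝ)
    (hzero : ∀ t, c 0 t = 0)
    (hdecay : ∀ k : ℕ, 1 ≤ k → ∀ t, t₀ ≤ t →
      ∑ j, ∑' α : {α : Fin d → ℕ // ∑ i, α i = k}, |c α.1 t j| ≤ D₀ / R ^ k)
    (lam : Fin d → ℝ)
    (hjac : ∀ (t : ℝ) (i j : Fin d),
      c (fun i' => if i' = i then 1 else 0) t j = if j = i then lam i else 0)
    (hlam : ∀ i, lam i ≤ -μ₀)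
    (x : ℝ → EuclideanSpace ℝ (Fin d))
    (hode : ∀ t, t₀ ≤ t → HasDerivAt x
      (WithLp.toLp 2 (fun j => ∑' α : (Fin d → ℕ), c α t j * ∏ i, (x t i) ^ (α i)) :
        EuclideanSpace ℝ (Fin d)) t) :
    ∀ t, t₀ ≤ t → ‖x t‖ < R →
      (1/2) * deriv (fun s => ‖x s‖^2) t ≤
        (-μ₀ + D₀ * ‖x t‖ / (R * (R - ‖x t‖))) * ‖x t‖^2 := by
  intro t ht hlt
  haveI fib_fintype : ∀ k : ℕ, Fintype {α : Fin d → ℕ // ∑ i, α i = k} :=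
    fun k => Fintype.subtype (Finset.Nat.antidiagonalTuple d k)
      (fun _ => Finset.Nat.mem_antidiagonalTuple)
  set u := ‖x t‖ with hu
  have hu0 : 0 ≤ u := norm_nonneg _
  have hRu : 0 < R - u := sub_pos.mpr hlt
  have hr1 : u / R < 1 := (div_lt_one hR).mpr hlt
  have hr0 : 0 ≤ u / R := div_nonneg hu0 hR.le
  -- the vector field value
  set v : EuclideanSpace ℝ (Fin d) :=
    WithLp.toLp 2 (fun j => ∑' α : (Fin d → ℕ), c α t j * ∏ i, (x t i) ^ (α i)) with hv
  have hx : HasDerivAt x v t := hode t ht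
  -- derivative of the squared norm
  have hnorm : HasDerivAt (fun s => ‖x s‖^2) (2 * (inner ℝ (x t) v : ℝ)) t := by
    have h1 := HasDerivAt.inner ℝ hx hx
    simp only [real_inner_self_eq_norm_sq] at h1
    refine h1.congr_deriv ?_
    rw [real_inner_comm]; ring
  rw [hnorm.deriv]
  have hlhs : (1/2 : ℝ) * (2 * (inner ℝ (x t) v : ℝ)) = ∑ j, x t j * v j := by
    rw [PiLp.inner_apply]; simp [RCLike.inner_apply, conj_trivial]
    exact Finset.sum_congr rfl (fun i _ => mul_comm _ _)
  rw [hlhs]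
  -- componentwise bound on x
  have hxj : ∀ j, |x t j| ≤ u := by
    intro j
    rw [hu, EuclideanSpace.norm_eq]
    rw [show |x t j| = Real.sqrt ((x t j)^2) from (Real.sqrt_sq_eq_abs _).symm]
    apply Real.sqrt_le_sqrt
    have := Finset.single_le_sum (f := fun i => ‖x t i‖^2) (fun i _ => sq_nonneg _)
      (Finset.mem_univ j)
    simpa [Real.norm_eq_abs, sq_abs] using this
  have hsum_sq : ∑ j, (x t j)^2 = u^2 := by
    rw [hu, ← real_inner_self_eq_norm_sq]
    rw [PiLp.inner_apply]; simp [RCLike.inner_apply, conj_trivial, sq]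
  -- notation
  set g : Fin d → (Fin d → ℕ) → ℝ := fun j α => c α t j * ∏ i, x t i ^ α i with hg
  set C : Fin d → ℕ → ℝ := fun j k =>
    ∑' α : {α : Fin d → ℕ // ∑ i, α i = k}, |c α.1 t j| with hC
  have hCnn : ∀ j k, 0 ≤ C j k := fun j k => tsum_nonneg (fun _ => abs_nonneg _)
  have hCk : ∀ j k, 1 ≤ k → C j k ≤ D₀ / R ^ k := by
    intro j k hk
    have h := hdecay k hk t ht
    have h2 : C j k ≤ ∑ j', C j' k :=
      Finset.single_le_sum (fun j' _ => hCnn j' k) (Finset.mem_univ j)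
    exact h2.trans h
  have hC0 : ∀ j, C j 0 = 0 := by
    intro j
    rw [hC]
    have hz : ∀ β : {α : Fin d → ℕ // ∑ i, α i = 0}, |c β.1 t j| = 0 := by
      rintro ⟨α, hα⟩
      have hα0 : α = 0 := funext fun i => Finset.sum_eq_zero_iff.mp hα i (Finset.mem_univ i)
      simp [hα0, hzero t]
    calc ∑' β : {α : Fin d → ℕ // ∑ i, α i = 0}, |c β.1 t j|
        = ∑' _ : {α : Fin d → ℕ // ∑ i, α i = 0}, (0:ℝ) := tsum_congr hz
      _ = 0 := tsum_zero
  -- pointwise bound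
  have habs : ∀ j α, |g j α| ≤ |c α t j| * u ^ (∑ i, α i) := by
    intro j α
    rw [hg, abs_mul]
    apply mul_le_mul_of_nonneg_left _ (abs_nonneg _)
    calc |∏ i, x t i ^ α i| = ∏ i, |x t i| ^ α i := by
          rw [Finset.abs_prod]; exact Finset.prod_congr rfl (fun i _ => abs_pow _ _)
      _ ≤ ∏ i, u ^ α i := Finset.prod_le_prod (fun i _ => pow_nonneg (abs_nonneg _) _)
          (fun i _ => pow_le_pow_left₀ (abs_nonneg _) (hxj i) _)
      _ = u ^ ∑ i, α i := Finset.prod_pow_eq_pow_sum _ _ _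
  -- fiber bounds
  have hT : ∀ j k, ∑' β : {α : Fin d → ℕ // ∑ i, α i = k}, |g j β.1| ≤ C j k * u ^ k := by
    intro j k
    calc ∑' β : {α : Fin d → ℕ // ∑ i, α i = k}, |g j β.1|
        ≤ ∑' β : {α : Fin d → ℕ // ∑ i, α i = k}, |c β.1 t j| * u ^ k := by
          apply Summable.tsum_le_tsum _ Summable.of_finite Summable.of_finite
          intro β
          exact (habs j β.1).trans_eq (by rw [β.2])
      _ = C j k * u ^ k := by rw [tsum_mul_right]
  have hTb : ∀ j k, ∑' β : {α : Fin d → ℕ // ∑ i, α i = k}, |g j β.1| ≤ D₀ * (u/R) ^ k := by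
    intro j k
    rcases Nat.eq_zero_or_pos k with hk | hk
    · subst hk
      refine (hT j 0).trans ?_
      rw [hC0]
      simp [hD₀.le]
    · refine (hT j k).trans ?_
      calc C j k * u ^ k ≤ (D₀ / R ^ k) * u ^ k :=
            mul_le_mul_of_nonneg_right (hCk j k hk) (pow_nonneg hu0 k)
        _ = D₀ * (u/R) ^ k := by rw [div_pow]; ring
  have hgeo : Summable (fun k : ℕ => D₀ * (u/R) ^ k) :=
    (summable_geometric_of_lt_one hr0 hr1).mul_left D₀
  -- summability of g j
  set e := Equiv.sigmaFiberEquiv (fun α : Fin d → ℕ => ∑ i, α i) with he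
  have hgabs_sum : ∀ j, Summable (fun α => |g j α|) := by
    intro j
    rw [← e.summable_iff]
    refine (summable_sigma_of_nonneg (fun _ => abs_nonneg _)).mpr
      ⟨fun k => Summable.of_finite, ?_⟩
    apply Summable.of_nonneg_of_le (fun k => tsum_nonneg (fun _ => abs_nonneg _))
      (fun k => hTb j k) hgeo
  have hg_sum : ∀ j, Summable (g j) := fun j => summable_abs_iff.mp (hgabs_sum j)
  -- fiber sums
  set S : Fin d → ℕ → ℝ := fun j k =>
    ∑' β : {α : Fin d → ℕ // ∑ i, α i = k}, g j β.1 with hS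
  have hvj : ∀ j, v j = ∑' k : ℕ, S j k := by
    intro j
    have h1 : Summable ((g j) ∘ e) := e.summable_iff.mpr (hg_sum j)
    calc v j = ∑' α : (Fin d → ℕ), g j α := rfl
      _ = ∑' σ : Σ k : ℕ, {α : Fin d → ℕ // ∑ i, α i = k}, g j (e σ) := (e.tsum_eq (g j)).symm
      _ = ∑' k : ℕ, S j k := Summable.tsum_sigma h1
  have hSabs : ∀ j k, |S j k| ≤ ∑' β : {α : Fin d → ℕ // ∑ i, α i = k}, |g j β.1| := by
    intro j k
    have := norm_tsum_le_tsum_norm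
      (f := fun β : {α : Fin d → ℕ // ∑ i, α i = k} => g j β.1) (by exact Summable.of_finite)
    simpa [Real.norm_eq_abs, hS, tsum_fintype] using this
  have hSsum : ∀ j, Summable (S j) := by
    intro j
    apply summable_abs_iff.mp
    exact Summable.of_nonneg_of_le (fun k => abs_nonneg _)
      (fun k => (hSabs j k).trans (hTb j k)) hgeo
  have hS0 : ∀ j, S j 0 = 0 := by
    intro j
    rw [hS]
    have hz : ∀ β : {α : Fin d → ℕ // ∑ i, α i = 0}, g j β.1 = 0 := by
      rintro ⟨α, hα⟩
      have hα0 : α = 0 := funext fun i => Finset.sum_eq_zero_iff.mp hα i (Finset.mem_univ i)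
      simp [hg, hα0, hzero t]
    calc ∑' β : {α : Fin d → ℕ // ∑ i, α i = 0}, g j β.1
        = ∑' _ : {α : Fin d → ℕ // ∑ i, α i = 0}, (0:ℝ) := tsum_congr hz
      _ = 0 := tsum_zero
  -- degree-one fiber
  have hS1 : ∀ j, S j 1 = lam j * x t j := by
    intro j
    have hmem : ∀ i : Fin d, ∑ i', (if i' = i then 1 else 0) = 1 := by
      intro i; simp
    let e1 : Fin d ≃ {α : Fin d → ℕ // ∑ i, α i = 1} :=
      Equiv.ofBijective (fun i => ⟨fun i' => if i' = i then 1 else 0, hmem i⟩)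
        ⟨by
          intro i i' hii'
          by_contra hne
          have h2 := congrArg (fun β => β.1 i) hii'
          simp [hne] at h2,
        by
          rintro ⟨α, hα⟩
          obtain ⟨i, hi⟩ := aux_sum_eq_one α hα
          exact ⟨i, Subtype.ext hi.symm⟩⟩
    show (∑' β : {α : Fin d → ℕ // ∑ i, α i = 1}, g j β.1) = _
    rw [← e1.tsum_eq, tsum_fintype]
    have hterm : ∀ i, g j (fun i' => if i' = i then 1 else 0) =
        (if j = i then lam i else 0) * x t i := by
      intro i
      rw [hg]
      simp only [hjac t i j]
      congr 1
      have : ∀ i', x t i' ^ (if i' = i then 1 else 0) = if i' = i then x t i' else 1 := by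
        intro i'; split <;> simp
      rw [Finset.prod_congr rfl (fun i' _ => this i')]
      simp
    calc ∑ i, g j ((e1 i).1) = ∑ i, (if j = i then lam i else 0) * x t i :=
          Finset.sum_congr rfl (fun i _ => hterm i)
      _ = lam j * x t j := by simp
  -- split off degrees 0 and 1
  have hCg : ∀ j, Summable (fun k => C j (k+2) * u^(k+2)) := by
    intro j
    apply Summable.of_nonneg_of_le
      (fun k => mul_nonneg (hCnn j _) (pow_nonneg hu0 _))
      (fun k => ?_) ((summable_nat_add_iff 2).mpr hgeo)
    calc C j (k+2) * u^(k+2) ≤ (D₀ / R^(k+2)) * u^(k+2) :=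
          mul_le_mul_of_nonneg_right (hCk j (k+2) (by omega)) (pow_nonneg hu0 _)
      _ = D₀ * (u/R)^(k+2) := by rw [div_pow]; ring
  have hrem : ∀ j, Summable (fun k => S j (k+2)) := fun j =>
    (summable_nat_add_iff 2).mpr (hSsum j)
  have hsplit : ∀ j, v j = lam j * x t j + ∑' k, S j (k+2) := by
    intro j
    rw [hvj j, Summable.tsum_eq_zero_add (hSsum j), hS0 j, zero_add,
      Summable.tsum_eq_zero_add ((summable_nat_add_iff 1).mpr (hSsum j))]
    rw [show (0:ℕ)+1 = 1 from rfl, hS1 j]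
  -- bound the remainder for each j
  have hremb : ∀ j, |∑' k, S j (k+2)| ≤ ∑' k, C j (k+2) * u^(k+2) := by
    intro j
    have h1 : |∑' k, S j (k+2)| ≤ ∑' k, |S j (k+2)| := by
      have := norm_tsum_le_tsum_norm (f := fun k => S j (k+2)) (by
        apply summable_abs_iff.mpr (hrem j) |>.congr
        intro k; rfl)
      simpa [Real.norm_eq_abs] using this
    refine h1.trans ?_
    apply Summable.tsum_le_tsum _ _ (hCg j)
    · intro k
      exact (hSabs j (k+2)).trans (hT j (k+2))
    · exact summable_abs_iff.mpr (hrem j)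
  -- geometric sum evaluation
  have hgeoval : ∑' k : ℕ, D₀ * (u/R)^(k+2) = D₀ * u^2 / (R * (R - u)) := by
    have h1 : ∀ k : ℕ, D₀ * (u/R)^(k+2) = (D₀ * (u/R)^2) * (u/R)^k := by
      intro k; rw [pow_add]; ring
    rw [tsum_congr h1, tsum_mul_left, tsum_geometric_of_lt_one hr0 hr1]
    rw [show (1 : ℝ) - u/R = (R - u)/R by field_simp]
    field_simp
  -- final assembly
  have hremsum : ∑ j, (x t j * ∑' k, S j (k+2)) ≤ D₀ * u / (R * (R-u)) * u^2 := by
    have hb : ∀ j, x t j * ∑' k, S j (k+2) ≤ u * ∑' k, C j (k+2) * u^(k+2) := by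
      intro j
      calc x t j * ∑' k, S j (k+2) ≤ |x t j * ∑' k, S j (k+2)| := le_abs_self _
        _ = |x t j| * |∑' k, S j (k+2)| := abs_mul _ _
        _ ≤ u * ∑' k, C j (k+2) * u^(k+2) :=
            mul_le_mul (hxj j) (hremb j) (abs_nonneg _)  hu0
    calc ∑ j, (x t j * ∑' k, S j (k+2)) ≤ ∑ j, u * ∑' k, C j (k+2) * u^(k+2) :=
          Finset.sum_le_sum (fun j _ => hb j)
      _ = u * ∑ j, ∑' k, C j (k+2) * u^(k+2) := by rw [Finset.mul_sum]
      _ = u * ∑' k, ∑ j, C j (k+2) * u^(k+2) := by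
          rw [Summable.tsum_finsetSum (fun j _ => hCg j)]
      _ ≤ u * ∑' k, D₀ * (u/R)^(k+2) := by
          apply mul_le_mul_of_nonneg_left _ hu0
          apply Summable.tsum_le_tsum _ (summable_sum (fun j _ => hCg j))
            ((summable_nat_add_iff 2).mpr hgeo)
          intro k
          rw [← Finset.sum_mul]
          calc (∑ j, C j (k+2)) * u^(k+2) ≤ (D₀ / R^(k+2)) * u^(k+2) :=
                mul_le_mul_of_nonneg_right (hdecay (k+2) (by omega) t ht) (pow_nonneg hu0 _)
            _ = D₀ * (u/R)^(k+2) := by rw [div_pow]; ring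
      _ = u * (D₀ * u^2 / (R * (R-u))) := by rw [hgeoval]
      _ = D₀ * u / (R * (R-u)) * u^2 := by ring
  have hlin : ∑ j, lam j * (x t j)^2 ≤ -μ₀ * u^2 := by
    calc ∑ j, lam j * (x t j)^2 ≤ ∑ j, -μ₀ * (x t j)^2 :=
          Finset.sum_le_sum (fun j _ => mul_le_mul_of_nonneg_right (hlam j) (sq_nonneg _))
      _ = -μ₀ * ∑ j, (x t j)^2 := by rw [Finset.mul_sum]
      _ = -μ₀ * u^2 := by rw [hsum_sq]
  calc ∑ j, x t j * v j
      = ∑ j, (lam j * (x t j)^2 + x t j * ∑' k, S j (k+2)) := by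
        apply Finset.sum_congr rfl
        intro j _
        rw [hsplit j]; ring
    _ = ∑ j, lam j * (x t j)^2 + ∑ j, (x t j * ∑' k, S j (k+2)) := Finset.sum_add_distrib
    _ ≤ -μ₀ * u^2 + D₀ * u / (R * (R-u)) * u^2 := add_le_add hlin hremsum
    _ = (-μ₀ + D₀ * u / (R * (R - u))) * u^2 := by ring
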